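/- Let p ≥ 3 be an odd integer and let M₂ be the (p-1)×(p-1) real symmetric matrix with diagonal entries (M₂)ᵢᵢ = 0 for 1 ≤ i ≤ (p+1)/2, (M₂)ᵢᵢ = 2 for (p+1)/2 < i ≤ p-1, and off-diagonal entries (M₂)ᵢ_k = 1 for all i ≠ k. Then M₂ has exactly (p-1)/2 positive eigenvalues and exactly (p-1)/2 negative eigenvalues (counted with multiplicity); in particular the signature of M₂ is 0. -/

import Mathlib

open Polynomial

/-- The matrix `M₂`: diagonal entries `0` in the first `(p+1)/2` slots, `2` afterwards,
and off-diagonal entries all `1`. -/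
noncomputable def Mtwo (p : ℕ) : Matrix (Fin (p - 1)) (Fin (p - 1)) ℝ :=
  Matrix.of fun i k => if i = k then (if (i : ℕ) < (p + 1) / 2 then (0 : ℝ) else 2) else 1

lemma card_filt (n t : ℕ) (ht : t ≤ n) :
    (Finset.univ.filter fun i : Fin n => (i:ℕ) < t).card = t := by
  have h : ∀ m ∈ Finset.range t, m < n := fun m hm => lt_of_lt_of_le (Finset.mem_range.mp hm) ht
  have : (Finset.univ.filter fun i : Fin n => (i:ℕ) < t) = (Finset.range t).attachFin h := by
    ext i; simp [Finset.mem_attachFin]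
  rw [this, Finset.card_attachFin, Finset.card_range]

lemma det_diag_sub_one {n : Type*} [Fintype n] [DecidableEq n] (d : n → ℝ) (hd : ∀ i, d i ≠ 0) :
    Matrix.det (Matrix.of fun i k => (if i = k then d i else 0) - 1) =
      (∏ i, d i) * (1 - ∑ i, (d i)⁻¹) := by
  have key : (Matrix.of fun i k : n => (if i = k then d i else 0) - 1)
      = Matrix.diagonal d *
        (1 + Matrix.replicateCol Unit (fun i => -(d i)⁻¹) * Matrix.replicateRow Unit (fun _ => (1:ℝ))) := by
    ext i k
    simp only [Matrix.mul_apply, Matrix.diagonal_apply, Matrix.add_apply, Matrix.one_apply,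
      Matrix.of_apply, Matrix.replicateCol_apply, Matrix.replicateRow_apply]
    rw [Finset.sum_eq_single i]
    · by_cases h : i = k
      · simp only [h, if_pos rfl, Finset.sum_const, Finset.card_univ, Fintype.card_unit,
          one_smul, mul_one, if_true]
        field_simp [hd k]
        ring
      · simp only [if_pos rfl, if_neg h, Finset.sum_const, Finset.card_univ, Fintype.card_unit,
          one_smul, mul_one, zero_add, if_true]
        field_simp [hd i]
        norm_num
    · intro b _ hb; simp [hb.symm]
    · simp
  rw [key, Matrix.det_mul, Matrix.det_diagonal, Matrix.det_one_add_replicateCol_mul_replicateRow]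
  simp only [dotProduct, mul_neg, one_mul, Finset.sum_neg_distrib]
  ring

lemma eval_charpoly {n : ℕ} (M : Matrix (Fin n) (Fin n) ℝ) (x : ℝ) :
    eval x M.charpoly = Matrix.det (Matrix.of fun i k => (if i = k then x else 0) - M i k) := by
  rw [Matrix.charpoly, ← Polynomial.coe_evalRingHom, RingHom.map_det]
  congr 1; ext i k
  by_cases h : i = k <;>
    simp [h, Matrix.charmatrix_apply_eq, Matrix.charmatrix_apply_ne, Matrix.map_apply]

lemma eval_charpoly_Mtwo (p m : ℕ) (hm : 1 ≤ m) (hp : p = 2*m+1) (x : ℝ)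
    (hx1 : x - 1 ≠ 0) (hx2 : x + 1 ≠ 0) :
    eval x (Mtwo p).charpoly =
      (x+1)^(m+1) * (x-1)^(m-1) * (1 - (((m:ℝ)+1)*(x+1)⁻¹ + ((m:ℝ)-1)*(x-1)⁻¹)) := by
  have hp1 : p - 1 = 2*m := by omega
  have hp2 : (p + 1)/2 = m + 1 := by omega
  rw [eval_charpoly]
  set d : Fin (p-1) → ℝ := fun i => if (i:ℕ) < (p+1)/2 then x+1 else x-1 with hd_def
  have hd : ∀ i, d i ≠ 0 := by
    intro i; simp only [hd_def]; split
    · exact hx2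
    · exact hx1
  have hmat : (Matrix.of fun i k : Fin (p-1) => (if i = k then x else 0) - Mtwo p i k)
      = Matrix.of fun i k => (if i = k then d i else 0) - 1 := by
    ext i k
    by_cases h : i = k
    · subst h
      by_cases h2 : (i:ℕ) < (p+1)/2 <;>
        simp [Matrix.of_apply, Mtwo, hd_def, h2] <;> ring
    · simp [Matrix.of_apply, h, Mtwo]
  rw [hmat, det_diag_sub_one d hd]
  have hcard : (Finset.univ.filter fun i : Fin (p-1) => (i:ℕ) < (p+1)/2).card = m+1 := by
    rw [hp2]; exact card_filt _ _ (by omega)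
  have hcard2 : (Finset.univ.filter fun i : Fin (p-1) => ¬ (i:ℕ) < (p+1)/2).card = m-1 := by
    have := Finset.card_filter_add_card_filter_not
      (s := (Finset.univ : Finset (Fin (p-1)))) (p := fun i : Fin (p-1) => (i:ℕ) < (p+1)/2)
    rw [Finset.card_univ, Fintype.card_fin, hcard] at this
    omega
  have hprod : (∏ i, d i) = (x+1)^(m+1) * (x-1)^(m-1) := by
    rw [hd_def]
    rw [Finset.prod_ite, Finset.prod_const, Finset.prod_const, hcard, hcard2]
  have hsum : (∑ i, (d i)⁻¹) = ((m:ℝ)+1)*(x+1)⁻¹ + ((m:ℝ)-1)*(x-1)⁻¹ := by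
    rw [hd_def]
    simp only [apply_ite Inv.inv]
    rw [Finset.sum_ite, Finset.sum_const, Finset.sum_const, hcard, hcard2,
      nsmul_eq_mul, nsmul_eq_mul]
    push_cast [hm]
    ring
  rw [hprod, hsum]

lemma card_filter_replicate (q : ℝ → Prop) [DecidablePred q] (n : ℕ) (r : ℝ) :
    Multiset.card (Multiset.filter q (Multiset.replicate n r)) = if q r then n else 0 := by
  induction n with
  | zero => simp
  | succ n ih =>
    rw [Multiset.replicate_succ, Multiset.filter_cons]
    by_cases h : q r <;> simp [h, ih]

lemma charpoly_Mtwo_one (p : ℕ) (hp : p = 3) :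
    (Mtwo p).charpoly = (X - C 1) * (X - C (-1)) := by
  apply eq_of_infinite_eval_eq
  have hinf : (({1, -1} : Set ℝ)ᶜ).Infinite :=
    Set.Finite.infinite_compl (by simp)
  refine hinf.mono ?_
  intro x hx
  simp only [Set.mem_compl_iff, Set.mem_insert_iff, Set.mem_singleton_iff, not_or] at hx
  obtain ⟨hx1, hx2⟩ := hx
  have h1 : x - 1 ≠ 0 := sub_ne_zero.mpr hx1
  have h2 : x + 1 ≠ 0 := by intro h; apply hx2; linarith
  show eval x _ = eval x _
  rw [eval_charpoly_Mtwo p 1 le_rfl (by omega) x h1 h2]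
  simp only [eval_mul, eval_sub, eval_X, eval_C]
  norm_num
  field_simp
  ring

lemma charpoly_Mtwo_big (p m : ℕ) (hm : 2 ≤ m) (hp : p = 2*m+1) :
    (Mtwo p).charpoly = (X - C (-1))^m * (X - C 1)^(m-2) *
      ((X - C ((m:ℝ) + Real.sqrt ((m:ℝ)^2-1))) * (X - C ((m:ℝ) - Real.sqrt ((m:ℝ)^2-1)))) := by
  obtain ⟨k, rfl⟩ : ∃ k, m = k + 2 := ⟨m - 2, by omega⟩
  apply eq_of_infinite_eval_eq
  have hinf : (({1, -1} : Set ℝ)ᶜ).Infinite :=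
    Set.Finite.infinite_compl (by simp)
  refine hinf.mono ?_
  intro x hx
  simp only [Set.mem_compl_iff, Set.mem_insert_iff, Set.mem_singleton_iff, not_or] at hx
  obtain ⟨hx1, hx2⟩ := hx
  have h1 : x - 1 ≠ 0 := sub_ne_zero.mpr hx1
  have h2 : x + 1 ≠ 0 := by intro h; apply hx2; linarith
  show eval x _ = eval x _
  rw [eval_charpoly_Mtwo p (k+2) (by omega) hp x h1 h2]
  simp only [eval_mul, eval_pow, eval_sub, eval_X, eval_C]
  set M : ℝ := ((k+2 : ℕ) : ℝ) with hM
  set s : ℝ := Real.sqrt (M^2 - 1) with hs_def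
  have hMval : M = (k:ℝ) + 2 := by rw [hM]; push_cast; ring
  have hs : s^2 = M^2 - 1 := Real.sq_sqrt (by nlinarith [hMval])
  have hab : (x - (M + s)) * (x - (M - s)) = x^2 - 2*M*x + 1 := by
    have h : (x - (M + s)) * (x - (M - s)) = x^2 - 2*M*x + (M^2 - s^2) := by ring
    rw [h, hs]; ring
  rw [hab]
  have e1 : k + 2 + 1 = k + 3 := rfl
  have e2 : k + 2 - 1 = k + 1 := rfl
  have e3 : k + 2 - 2 = k := rfl
  rw [e2, e3]
  rw [hMval]
  have hx1' : x - (-1) = x + 1 := by ring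
  field_simp
  ring

theorem Mtwo_signature_zero (p : ℕ) (hp : 3 ≤ p) (hpodd : Odd p) :
    Multiset.card ((Mtwo p).charpoly.roots.filter fun x => 0 < x) = (p - 1) / 2 ∧
      Multiset.card ((Mtwo p).charpoly.roots.filter fun x => x < 0) = (p - 1) / 2 := by
  obtain ⟨m, hm⟩ : ∃ m, p = 2*m+1 := by
    obtain ⟨j, hj⟩ := hpodd; exact ⟨j, by omega⟩
  have hm1 : 1 ≤ m := by omega
  rcases eq_or_lt_of_le hm1 with h1 | h2
  · -- m = 1, p = 3
    have hp3 : p = 3 := by omega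
    rw [charpoly_Mtwo_one p hp3, roots_mul (mul_ne_zero (X_sub_C_ne_zero _) (X_sub_C_ne_zero _)),
      roots_X_sub_C, roots_X_sub_C, hp3]
    constructor <;>
    · rw [Multiset.filter_add, Multiset.filter_singleton, Multiset.filter_singleton]
      norm_num
  · -- m ≥ 2
    have hm2 : 2 ≤ m := h2
    rw [charpoly_Mtwo_big p m hm2 hm]
    set M : ℝ := (m : ℝ) with hM
    set s : ℝ := Real.sqrt (M^2 - 1) with hs_def
    have hM2 : (2:ℝ) ≤ M := by rw [hM]; exact_mod_cast hm2
    have hs_nonneg : 0 ≤ s := Real.sqrt_nonneg _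
    have hsM : s < M := by
      rw [hs_def]
      rw [Real.sqrt_lt' (by linarith)]
      linarith
    have ha : 0 < M + s := by linarith
    have hb : 0 < M - s := by linarith
    rw [roots_mul (mul_ne_zero
        (mul_ne_zero (pow_ne_zero _ (X_sub_C_ne_zero _)) (pow_ne_zero _ (X_sub_C_ne_zero _)))
        (mul_ne_zero (X_sub_C_ne_zero _) (X_sub_C_ne_zero _))),
      roots_mul (mul_ne_zero (pow_ne_zero _ (X_sub_C_ne_zero _))
        (pow_ne_zero _ (X_sub_C_ne_zero _))),
      roots_mul (mul_ne_zero (X_sub_C_ne_zero _) (X_sub_C_ne_zero _)),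
      roots_pow, roots_pow, roots_X_sub_C, roots_X_sub_C, roots_X_sub_C, roots_X_sub_C,
      Multiset.nsmul_singleton, Multiset.nsmul_singleton]
    have hpm : (p - 1) / 2 = m := by omega
    rw [hpm]
    constructor
    · rw [Multiset.filter_add, Multiset.filter_add, Multiset.filter_add, Multiset.card_add,
        Multiset.card_add, Multiset.card_add, card_filter_replicate, card_filter_replicate,
        Multiset.filter_singleton, Multiset.filter_singleton]
      rw [if_neg (by norm_num : ¬ (0:ℝ) < -1), if_pos (by norm_num : (0:ℝ) < 1),
        if_pos ha, if_pos hb]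
      simp
      omega
    · rw [Multiset.filter_add, Multiset.filter_add, Multiset.filter_add, Multiset.card_add,
        Multiset.card_add, Multiset.card_add, card_filter_replicate, card_filter_replicate,
        Multiset.filter_singleton, Multiset.filter_singleton]
      rw [if_pos (by norm_num : (-1:ℝ) < 0), if_neg (by norm_num : ¬ (1:ℝ) < 0),
        if_neg (by linarith : ¬ M + s < 0), if_neg (by linarith : ¬ M - s < 0)]
      simp
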